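/- Let F be the distribution function of a real random variable, let Φ be the standard normal distribution function, set R = F − Φ and Δ = sup_{v ∈ ℝ} |R(v)|. Then for every h > 0 and every real a, the Lebesgue–Stieltjes integral satisfies |∫_{[a,∞)} e^{−h v} dR(v)| ≤ 2 Δ e^{−h a}; in particular, if a ≥ 0 then |∫_{[a,∞)} e^{−h v} dR(v)| ≤ 2 Δ. -/

import Mathlib

open MeasureTheory Real Set ProbabilityTheory Filter

lemma aux_Ico_toReal (μ : Measure ℝ) [IsProbabilityMeasure μ] {a b : ℝ} (hab : a ≤ b) :
    (μ (Ico a b)).toReal = (μ (Iio b)).toReal - (μ (Iio a)).toReal := by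
  have hdisj : Disjoint (Iio a) (Ico a b) := by
    rw [Set.disjoint_left]
    rintro x hx ⟨hx1, _⟩
    exact absurd hx1 (not_le.2 hx)
  have key : μ (Iio a) + μ (Ico a b) = μ (Iio b) := by
    rw [← measure_union hdisj measurableSet_Ico, Iio_union_Ico_eq_Iio hab]
  rw [← key, ENNReal.toReal_add (measure_ne_top _ _) (measure_ne_top _ _)]
  ring

lemma aux_Iio_bound (μ₁ μ₂ : Measure ℝ) [IsProbabilityMeasure μ₁] [IsProbabilityMeasure μ₂]
    (Δ : ℝ) (hΔ : ∀ y : ℝ, |(μ₁ (Iic y)).toReal - (μ₂ (Iic y)).toReal| ≤ Δ) (x : ℝ) :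
    |(μ₁ (Iio x)).toReal - (μ₂ (Iio x)).toReal| ≤ Δ := by
  set s : ℕ → Set ℝ := fun n => Iic (x - 1 / (n + 1)) with hs
  have hmono : Monotone s := by
    intro m n hmn
    apply Iic_subset_Iic.2
    have : (1 : ℝ) / (n + 1) ≤ 1 / (m + 1) := by
      apply one_div_le_one_div_of_le (by positivity)
      have := (Nat.cast_le (α := ℝ)).2 hmn; linarith
    linarith
  have hU : ⋃ n, s n = Iio x := by
    ext y
    simp only [mem_iUnion, hs, mem_Iic, mem_Iio]
    constructor
    · rintro ⟨n, hn⟩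
      have : (0 : ℝ) < 1 / (n + 1) := by positivity
      linarith
    · intro hy
      obtain ⟨n, hn⟩ := exists_nat_one_div_lt (sub_pos.2 hy)
      exact ⟨n, by linarith⟩
  have tend : ∀ (μ : Measure ℝ), IsProbabilityMeasure μ →
      Tendsto (fun n => (μ (s n)).toReal) atTop (nhds (μ (Iio x)).toReal) := by
    intro μ hμ
    have h1 : Tendsto (fun n => μ (s n)) atTop (nhds (μ (⋃ n, s n))) :=
      tendsto_measure_iUnion_atTop hmono
    rw [hU] at h1
    exact (ENNReal.tendsto_toReal (measure_ne_top _ _)).comp h1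
  have h1 := tend μ₁ inferInstance
  have h2 := tend μ₂ inferInstance
  exact le_of_tendsto ((h1.sub h2).abs) (Eventually.of_forall fun n => hΔ _)

lemma aux_layercake (μ : Measure ℝ) [IsProbabilityMeasure μ] {h : ℝ} (hh : 0 < h) (a : ℝ) :
    ∫ v in Ici a, Real.exp (-h * v) ∂μ
      = ∫ t in Ioi (0:ℝ), (μ (Ico a (-Real.log t / h))).toReal := by
  have hint : Integrable (fun v => Real.exp (-h * v)) (μ.restrict (Ici a)) := by
    refine Integrable.mono' (integrable_const (Real.exp (-h * a)))
      ((Real.continuous_exp.comp (continuous_const.mul continuous_id)).aestronglyMeasurable) ?_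
    refine (ae_restrict_iff' measurableSet_Ici).2 (Eventually.of_forall fun v hv => ?_)
    rw [Real.norm_eq_abs, abs_of_pos (Real.exp_pos _)]
    apply Real.exp_le_exp.2
    have : a ≤ v := hv
    nlinarith
  rw [hint.integral_eq_integral_meas_lt (Eventually.of_forall fun v => (Real.exp_pos _).le)]
  refine setIntegral_congr_fun measurableSet_Ioi fun t ht => ?_
  have ht' : (0:ℝ) < t := ht
  rw [measureReal_def]
  congr 1
  rw [Measure.restrict_apply' measurableSet_Ici]
  congr 1
  ext v
  simp only [mem_setOf_eq, mem_inter_iff, mem_Ici, mem_Ico]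
  constructor
  · rintro ⟨h1, h2⟩
    refine ⟨h2, ?_⟩
    have := (Real.log_lt_iff_lt_exp ht').2 h1
    rw [lt_div_iff₀ hh]
    nlinarith
  · rintro ⟨h2, h1⟩
    refine ⟨?_, h2⟩
    apply (Real.log_lt_iff_lt_exp ht').1
    rw [lt_div_iff₀ hh] at h1
    nlinarith

lemma aux_meas (μ : Measure ℝ) (a h : ℝ) :
    Measurable (fun t : ℝ => (μ (Ico a (-Real.log t / h))).toReal) := by
  have hmono : Monotone (fun u : ℝ => μ (Ico a u)) :=
    fun u v huv => measure_mono (Ico_subset_Ico_right huv)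
  exact (hmono.measurable.comp ((Real.measurable_log.neg).div_const h)).ennreal_toReal

/-- If `F` is a distribution function, `Φ` the standard normal distribution function,
`R = F − Φ` and `Δ = sup_v |R(v)|`, then for every `h > 0` and real `a`,
`|∫_{[a,∞)} e^{−hv} dR(v)| ≤ 2Δ e^{−ha}` (the integral being taken against the difference
of the two probability measures); in particular it is `≤ 2Δ` when `a ≥ 0`. -/
theorem tilted_integral_against_cdf_difference
    (ν : Measure ℝ) [IsProbabilityMeasure ν]
    (F Φ R : ℝ → ℝ)
    (hF : ∀ v, F v = (ν (Iic v)).toReal)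
    (hΦ : ∀ v, Φ v = ((gaussianReal 0 1) (Iic v)).toReal)
    (hR : ∀ v, R v = F v - Φ v)
    (Δ : ℝ) (hΔ : Δ = ⨆ v : ℝ, |R v|) :
    ∀ h : ℝ, 0 < h → ∀ a : ℝ,
      |(∫ v in Ici a, Real.exp (-h * v) ∂ν)
          - ∫ v in Ici a, Real.exp (-h * v) ∂(gaussianReal 0 1)|
        ≤ 2 * Δ * Real.exp (-h * a) ∧
      (0 ≤ a →
        |(∫ v in Ici a, Real.exp (-h * v) ∂ν)
            - ∫ v in Ici a, Real.exp (-h * v) ∂(gaussianReal 0 1)| ≤ 2 * Δ) := by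
  intro h hh a
  set γ : Measure ℝ := gaussianReal 0 1 with hγ
  -- boundedness of |R|
  have hRle : ∀ v, |R v| ≤ 2 := by
    intro v
    rw [hR v, hF v, hΦ v]
    have h1 : (ν (Iic v)).toReal ≤ 1 := by
      rw [← ENNReal.toReal_one]
      exact ENNReal.toReal_mono ENNReal.one_ne_top prob_le_one
    have h2 : (γ (Iic v)).toReal ≤ 1 := by
      rw [← ENNReal.toReal_one]
      exact ENNReal.toReal_mono ENNReal.one_ne_top prob_le_one
    have h3 : 0 ≤ (ν (Iic v)).toReal := ENNReal.toReal_nonneg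
    have h4 : 0 ≤ (γ (Iic v)).toReal := ENNReal.toReal_nonneg
    rw [abs_le]; constructor <;> linarith
  have hbdd : BddAbove (Set.range fun v => |R v|) := ⟨2, by rintro x ⟨v, rfl⟩; exact hRle v⟩
  have hΔle : ∀ v, |R v| ≤ Δ := fun v => hΔ ▸ le_ciSup hbdd v
  have hΔ0 : 0 ≤ Δ := (abs_nonneg (R 0)).trans (hΔle 0)
  have hIic : ∀ y : ℝ, |(ν (Iic y)).toReal - (γ (Iic y)).toReal| ≤ Δ := by
    intro y
    have := hΔle y
    rwa [hR y, hF y, hΦ y] at this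
  have hIio : ∀ x : ℝ, |(ν (Iio x)).toReal - (γ (Iio x)).toReal| ≤ Δ :=
    aux_Iio_bound ν γ Δ hIic
  set c : ℝ := Real.exp (-h * a) with hc
  have hc0 : 0 < c := Real.exp_pos _
  set b : ℝ → ℝ := fun t => -Real.log t / h with hb
  set g₁ : ℝ → ℝ := fun t => (ν (Ico a (b t))).toReal with hg₁
  set g₂ : ℝ → ℝ := fun t => (γ (Ico a (b t))).toReal with hg₂
  -- for t > c, the interval is empty
  have hempty : ∀ μ : Measure ℝ, ∀ t : ℝ, c < t → (μ (Ico a (b t))).toReal = 0 := by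
    intro μ t htc
    have hlog : -h * a ≤ Real.log t := by
      rw [← Real.log_exp (-h * a)]
      exact Real.log_le_log hc0 htc.le
    have hba : b t ≤ a := by
      rw [hb, div_le_iff₀ hh]
      nlinarith
    rw [Ico_eq_empty (not_lt.2 hba), measure_empty]
    simp
  have hle1 : ∀ (μ : Measure ℝ) [IsProbabilityMeasure μ], ∀ t : ℝ,
      (μ (Ico a (b t))).toReal ≤ 1 := by
    intro μ hμ t
    rw [← ENNReal.toReal_one]
    exact ENNReal.toReal_mono ENNReal.one_ne_top prob_le_one
  -- integrability of g₁, g₂ on Ioi 0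
  have hintg : ∀ (μ : Measure ℝ) [IsProbabilityMeasure μ],
      IntegrableOn (fun t => (μ (Ico a (b t))).toReal) (Ioi 0) := by
    intro μ hμ
    refine Integrable.mono' (g := (Ioc 0 c).indicator fun _ => (1:ℝ)) ?_
      (aux_meas μ a h).aestronglyMeasurable ?_
    · exact ((integrable_indicator_iff measurableSet_Ioc).2
        (integrableOn_const measure_Ioc_lt_top.ne)).restrict
    · refine (ae_restrict_iff' measurableSet_Ioi).2 (Eventually.of_forall fun t ht => ?_)
      rw [Real.norm_eq_abs, abs_of_nonneg ENNReal.toReal_nonneg]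
      by_cases htc : t ≤ c
      · rw [indicator_of_mem (mem_Ioc.2 ⟨ht, htc⟩)]
        exact hle1 μ t
      · rw [indicator_of_notMem (fun hmem => htc hmem.2), hempty μ t (not_le.1 htc)]
  have hint₁ := hintg ν
  have hint₂ := hintg γ
  -- the key bound
  have key : |(∫ v in Ici a, Real.exp (-h * v) ∂ν)
      - ∫ v in Ici a, Real.exp (-h * v) ∂γ| ≤ 2 * Δ * c := by
    rw [aux_layercake ν hh a, aux_layercake γ hh a, ← integral_sub hint₁ hint₂]
    have hbd : ∀ᵐ t ∂(volume.restrict (Ioi (0:ℝ))),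
        ‖g₁ t - g₂ t‖ ≤ (Ioc 0 c).indicator (fun _ => 2 * Δ) t := by
      refine (ae_restrict_iff' measurableSet_Ioi).2 (Eventually.of_forall fun t ht => ?_)
      change ‖(ν (Ico a (b t))).toReal - (γ (Ico a (b t))).toReal‖ ≤ _
      by_cases htc : t ≤ c
      · rw [indicator_of_mem (mem_Ioc.2 ⟨ht, htc⟩), Real.norm_eq_abs]
        by_cases hab : a ≤ b t
        · rw [aux_Ico_toReal ν hab, aux_Ico_toReal γ hab]
          have h1 := hIio (b t)
          have h2 := hIio a
          rw [abs_le] at h1 h2 ⊢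
          constructor <;> linarith [h1.1, h1.2, h2.1, h2.2]
        · have e1 : (Ico a (b t)) = ∅ := Ico_eq_empty (fun hlt => hab hlt.le)
          simp [e1, hΔ0]
      · rw [indicator_of_notMem (fun hmem => htc (mem_Ioc.1 hmem).2), Real.norm_eq_abs,
          hempty ν t (not_le.1 htc), hempty γ t (not_le.1 htc)]
        simp
    have hbint : Integrable ((Ioc 0 c).indicator fun _ => 2 * Δ) (volume.restrict (Ioi (0:ℝ))) :=
      ((integrable_indicator_iff measurableSet_Ioc).2
        (integrableOn_const measure_Ioc_lt_top.ne)).restrict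
    calc |∫ t in Ioi (0:ℝ), (g₁ t - g₂ t)|
        ≤ ∫ t in Ioi (0:ℝ), (Ioc 0 c).indicator (fun _ => 2 * Δ) t :=
          norm_integral_le_of_norm_le hbint hbd
      _ = 2 * Δ * c := by
          rw [integral_indicator measurableSet_Ioc, Measure.restrict_restrict measurableSet_Ioc]
          have : Ioc (0:ℝ) c ∩ Ioi 0 = Ioc 0 c := inter_eq_left.2 (fun x hx => hx.1)
          rw [this, setIntegral_const, Real.volume_real_Ioc_of_le hc0.le, smul_eq_mul]
          ring
  refine ⟨key, fun ha => key.trans ?_⟩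
  have hcle : c ≤ 1 := Real.exp_le_one_iff.2 (by nlinarith)
  nlinarith
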